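/- Let p be a positive integer, s an integer with gcd(p,s) = 1, and α₁⁰, α₂⁰ integers with gcd(α₁⁰,α₂⁰) = 1. Set u := gcd(p, sα₁⁰ − α₂⁰) and suppose u = gcd(p, sα₁⁰ + α₂⁰). Set α := p/u and α₁ := α·α₁⁰, and let β₁ be an integer with gcd(α₁,β₁) = 1. If p divides 2β₁, then p = 1 or p = 2. -/

import Mathlib

/-- If `u = gcd(p, sα₁⁰ − α₂⁰) = gcd(p, sα₁⁰ + α₂⁰)` with `gcd(p,s) = 1` and
`gcd(α₁⁰,α₂⁰) = 1`, and `β₁` is coprime to `α₁ = (p/u)·α₁⁰`, then `p ∣ 2β₁`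
forces `p ∈ {1, 2}`. -/
theorem case_A_divisibility (p : ℤ) (hp : 0 < p) (s α₁₀ α₂₀ : ℤ)
    (hps : Int.gcd p s = 1) (hcop : Int.gcd α₁₀ α₂₀ = 1)
    (u : ℤ) (hu : u = Int.gcd p (s * α₁₀ - α₂₀))
    (hu' : u = Int.gcd p (s * α₁₀ + α₂₀))
    (α α₁ : ℤ) (hα : α = p / u) (hα₁ : α₁ = α * α₁₀)
    (β₁ : ℤ) (hβ₁ : Int.gcd α₁ β₁ = 1)
    (hdvd : p ∣ 2 * β₁) :
    p = 1 ∨ p = 2 := by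
  -- u divides p, sα₁₀ - α₂₀, sα₁₀ + α₂₀
  have hup : u ∣ p := hu ▸ Int.gcd_dvd_left _ _
  have hum : u ∣ s * α₁₀ - α₂₀ := hu ▸ Int.gcd_dvd_right _ _
  have hupl : u ∣ s * α₁₀ + α₂₀ := hu' ▸ Int.gcd_dvd_right _ _
  have hunn : 0 ≤ u := hu ▸ Int.natCast_nonneg _
  have hu2a2 : u ∣ 2 * α₂₀ := by
    have := dvd_sub hupl hum
    rwa [show s * α₁₀ + α₂₀ - (s * α₁₀ - α₂₀) = 2 * α₂₀ by ring] at this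
  have husa : u ∣ s * (2 * α₁₀) := by
    have := dvd_add hupl hum
    rwa [show s * α₁₀ + α₂₀ + (s * α₁₀ - α₂₀) = s * (2 * α₁₀) by ring] at this
  have hcps : IsCoprime p s := Int.isCoprime_iff_gcd_eq_one.mpr hps
  have hcus : IsCoprime u s := hcps.of_isCoprime_of_dvd_left hup
  have hu2a1 : u ∣ 2 * α₁₀ := hcus.dvd_of_dvd_mul_left husa
  -- u ∣ 2
  have hcop' : IsCoprime α₁₀ α₂₀ := Int.isCoprime_iff_gcd_eq_one.mpr hcop
  obtain ⟨x, y, hxy⟩ := hcop'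
  have hu2 : u ∣ 2 := by
    have : u ∣ x * (2 * α₁₀) + y * (2 * α₂₀) :=
      dvd_add (Dvd.dvd.mul_left hu2a1 x) (Dvd.dvd.mul_left hu2a2 y)
    rwa [show x * (2 * α₁₀) + y * (2 * α₂₀) = 2 * (x * α₁₀ + y * α₂₀) by ring,
      hxy, mul_one] at this
  -- p = α * u
  have hune : u ≠ 0 := by
    rintro rfl
    exact absurd (zero_dvd_iff.mp hup) (by omega)
  have hpau : p = α * u := by rw [hα, Int.ediv_mul_cancel hup]
  -- d = gcd p β₁
  have hdp : (Int.gcd p β₁ : ℤ) ∣ p := Int.gcd_dvd_left _ _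
  have hdb : (Int.gcd p β₁ : ℤ) ∣ β₁ := Int.gcd_dvd_right _ _
  have hpd : p ∣ 2 * (Int.gcd p β₁ : ℤ) := by
    have h1 : p ∣ (Int.gcd (2 * p) (2 * β₁) : ℤ) := Int.dvd_coe_gcd ⟨2, by ring⟩ hdvd
    rw [Int.gcd_mul_left, Nat.cast_mul] at h1
    norm_num at h1
    exact h1
  -- d coprime to α₁, hence to α, so d ∣ u ∣ 2
  have hcab : IsCoprime α₁ β₁ := Int.isCoprime_iff_gcd_eq_one.mpr hβ₁
  have hcad : IsCoprime α₁ (Int.gcd p β₁ : ℤ) := hcab.of_isCoprime_of_dvd_right hdb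
  have hcαd : IsCoprime α (Int.gcd p β₁ : ℤ) :=
    hcad.of_isCoprime_of_dvd_left ⟨α₁₀, hα₁⟩
  have hdu : (Int.gcd p β₁ : ℤ) ∣ u := hcαd.symm.dvd_of_dvd_mul_left (hpau ▸ hdp)
  have hd2 : (Int.gcd p β₁ : ℤ) ∣ 2 := hdu.trans hu2
  have hd12 : Int.gcd p β₁ = 1 ∨ Int.gcd p β₁ = 2 :=
    (Nat.dvd_prime Nat.prime_two).mp (by exact_mod_cast hd2)
  rcases hd12 with h1 | h2
  · -- d = 1 : p ∣ 2
    rw [h1] at hpd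
    norm_num at hpd
    have := Int.le_of_dvd (by norm_num) hpd
    omega
  · -- d = 2 : then u = 2, α odd, p = 2α ∣ 4
    rw [h2] at hpd hdu hcαd
    norm_num at hpd hdu
    have hα2 : IsCoprime α (2 : ℤ) := by exact_mod_cast hcαd
    have hu2' : u = 2 := Int.dvd_antisymm hunn (by norm_num) hu2 hdu
    rw [hu2'] at hpau
    -- p = α * 2, p ∣ 4 ⇒ α ∣ 2
    obtain ⟨k, hk⟩ := hpd
    have hαk : α * k = 2 := by
      have h4 : 2 * (α * k) = 2 * 2 := by nlinarith [hk, hpau]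
      exact mul_left_cancel₀ two_ne_zero h4
    have hα4 : α ∣ 2 := ⟨k, hαk.symm⟩
    have hαpos : 0 < α := by nlinarith
    have hαle : α ≤ 2 := Int.le_of_dvd (by norm_num) hα4
    have hαne2 : α ≠ 2 := by
      intro h
      have := Int.isCoprime_iff_gcd_eq_one.mp (h ▸ hα2)
      norm_num [Int.gcd] at this
    have hα1 : α = 1 := by omega
    right
    rw [hpau, hα1]; ring
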